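/- Let φ : (0,∞) → ℝ be continuous, and assume that its upper right Dini derivative φ'_+(x) := limsup_{h→0+} (φ(x+h) − φ(x))/h is finite at every x ∈ (0,∞), Lebesgue measurable, and bounded on every compact subinterval [s,t] ⊂ (0,∞). If there exists a continuous function h : (0,∞) → ℝ such that φ'_+(x) = h(x) for Lebesgue-almost every x ∈ (0,∞), then φ is continuously differentiable on (0,∞) and φ'(x) = h(x) for every x ∈ (0,∞). -/

import Mathlib

open MeasureTheory Filter Set Topology

/-- Upper right Dini derivative, as a value in `EReal = [-∞,∞]`. -/
noncomputable def diniE (f : ℝ → ℝ) (x : ℝ) : EReal :=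
  Filter.limsup (fun h : ℝ => (((f (x + h) - f x) / h : ℝ) : EReal))
    (nhdsWithin 0 (Set.Ioi 0))

lemma tendsto_addRight_Ioi (x : ℝ) :
    Tendsto (fun h : ℝ => x + h) (nhdsWithin 0 (Ioi 0)) (nhdsWithin x (Ioi x)) := by
  apply tendsto_nhdsWithin_of_tendsto_nhds_of_eventually_within
  · simpa [Pi.add_def] using ((continuous_const.add continuous_id).tendsto (0:ℝ)).mono_left nhdsWithin_le_nhds
  · exact eventually_mem_nhdsWithin.mono fun h hh => by simpa using (hh : (0:ℝ) < h)

lemma tendsto_addRight_ne (x : ℝ) :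
    Tendsto (fun h : ℝ => x + h) (nhdsWithin 0 (Ioi 0)) (nhdsWithin x {x}ᶜ) := by
  apply tendsto_nhdsWithin_of_tendsto_nhds_of_eventually_within
  · simpa [Pi.add_def] using ((continuous_const.add continuous_id).tendsto (0:ℝ)).mono_left nhdsWithin_le_nhds
  · exact eventually_mem_nhdsWithin.mono fun h hh => by
      simp only [mem_compl_iff, mem_singleton_iff]
      intro he
      have : h = 0 := by linarith [congrArg id he]
      exact absurd this (ne_of_gt hh)

lemma diniE_eq_of_hasDerivAt {f : ℝ → ℝ} {x d : ℝ} (hd : HasDerivAt f d x) :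
    diniE f x = (d : EReal) := by
  have h1 : Tendsto (fun h : ℝ => (f (x + h) - f x) / h) (nhdsWithin 0 (Ioi 0)) (𝓝 d) := by
    have h2 := (hasDerivAt_iff_tendsto_slope.1 hd).comp (tendsto_addRight_ne x)
    convert h2 using 2 with h
    simp [Function.comp, slope_def_field]
  have h3 : Tendsto (fun h : ℝ => (((f (x + h) - f x) / h : ℝ) : EReal)) (nhdsWithin 0 (Ioi 0))
      (𝓝 ((d : ℝ) : EReal)) := EReal.tendsto_coe.2 h1
  exact h3.limsup_eq

lemma freq_slope_lt {f : ℝ → ℝ} {x C : ℝ} (hC : diniE f x ≤ (C : EReal)) {r : ℝ} (hr : C < r) :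
    ∃ᶠ z in nhdsWithin x (Ioi x), slope f x z < r := by
  have h1 : ∀ᶠ h in nhdsWithin (0:ℝ) (Ioi 0), slope f x (x + h) < r := by
    have hlt : diniE f x < (r : EReal) := lt_of_le_of_lt hC (by exact_mod_cast hr)
    filter_upwards [eventually_lt_of_limsup_lt hlt, eventually_mem_nhdsWithin] with h hh hmem
    rw [slope_def_field]
    have : (f (x + h) - f x) / h < r := by exact_mod_cast hh
    simpa using this
  exact (tendsto_addRight_Ioi x).frequently h1.frequently

lemma freq_slope_gt {f : ℝ → ℝ} {x C : ℝ} (hC : -(C : EReal) ≤ diniE f x) {r : ℝ} (hr : C < r) :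
    ∃ᶠ z in nhdsWithin x (Ioi x), -r < slope f x z := by
  have h1 : ∃ᶠ h in nhdsWithin (0:ℝ) (Ioi 0), -r < slope f x (x + h) := by
    have hlt : ((-r : ℝ) : EReal) < diniE f x := by
      refine lt_of_lt_of_le ?_ hC
      rw [EReal.coe_neg]
      exact_mod_cast (by exact_mod_cast neg_lt_neg hr : ((-r:ℝ):EReal) < ((-C:ℝ):EReal))
    have := frequently_lt_of_lt_limsup (by isBoundedDefault) hlt
    refine (this.and_eventually eventually_mem_nhdsWithin).mono ?_
    rintro h ⟨hh, hmem⟩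
    rw [slope_def_field]
    have : (-r : ℝ) < (f (x + h) - f x) / h := by exact_mod_cast hh
    simpa using this
  exact (tendsto_addRight_Ioi x).frequently h1

lemma lip_of_dini {φ : ℝ → ℝ} (hcont : ContinuousOn φ (Ioi 0)) {s t C : ℝ} (hs : 0 < s)
    (hC : ∀ x ∈ Icc s t, -(C : EReal) ≤ diniE φ x ∧ diniE φ x ≤ (C : EReal)) :
    ∀ a b, a ∈ Icc s t → b ∈ Icc s t → a ≤ b → |φ b - φ a| ≤ C * (b - a) := by
  intro a b ha hb hab
  have hIcc : Icc a b ⊆ Icc s t := Icc_subset_Icc ha.1 hb.2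
  have hpos : Icc a b ⊆ Ioi 0 := fun y hy => lt_of_lt_of_le hs (hIcc hy).1
  have hcont' : ContinuousOn φ (Icc a b) := hcont.mono hpos
  have hBd : ∀ (c : ℝ), ∀ x ∈ Ico a b,
      HasDerivWithinAt (fun y => c + C * (y - a)) C (Ici x) x := by
    intro c x _
    simpa using (((hasDerivWithinAt_id x (Ici x)).sub_const a).const_mul C).const_add c
  have hup : φ b ≤ φ a + C * (b - a) := by
    have := image_le_of_liminf_slope_right_le_deriv_boundary hcont'
      (B := fun y => φ a + C * (y - a)) (B' := fun _ => C) (by simp)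
      (Continuous.continuousOn (by continuity)) (hBd (φ a))
      (fun x hx r hr => freq_slope_lt (hC x (hIcc (Ico_subset_Icc_self hx))).2 hr)
    simpa using this (right_mem_Icc.2 hab)
  have hdown : -φ b ≤ -φ a + C * (b - a) := by
    have := image_le_of_liminf_slope_right_le_deriv_boundary (f := fun y => -φ y) hcont'.neg
      (B := fun y => -φ a + C * (y - a)) (B' := fun _ => C) (by simp)
      (Continuous.continuousOn (by continuity)) (hBd (-φ a))
      (fun x hx r hr => by
        have := freq_slope_gt (hC x (hIcc (Ico_subset_Icc_self hx))).1 hr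
        refine this.mono fun z hz => ?_
        have hz2 : slope (fun y => -φ y) x z = -slope φ x z := by
          simp [slope_def_field, neg_div, neg_sub]
          ring
        rw [hz2]; linarith)
    simpa using this (right_mem_Icc.2 hab)
  rw [abs_le]; constructor <;> linarith

lemma ae_hasDerivAt {φ h : ℝ → ℝ} (hcont : ContinuousOn φ (Ioi 0))
    (hae : ∀ᵐ x ∂(volume.restrict (Ioi (0:ℝ))), diniE φ x = (h x : EReal))
    {s t C : ℝ} (hs : 0 < s)
    (hC : ∀ x ∈ Icc s t, -(C : EReal) ≤ diniE φ x ∧ diniE φ x ≤ (C : EReal)) :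
    ∀ᵐ x, x ∈ Ioo s t → HasDerivAt φ (h x) x := by
  have hlip' := lip_of_dini hcont hs hC
  have hlip : LipschitzOnWith C.toNNReal φ (Icc s t) := by
    rw [lipschitzOnWith_iff_dist_le_mul]
    intro x hx y hy
    rcases le_total y x with hxy | hxy
    · rw [Real.dist_eq, Real.dist_eq, abs_sub_comm x y]
      have := hlip' y x hy hx hxy
      calc |φ x - φ y| ≤ C * (x - y) := this
        _ ≤ C.toNNReal * |y - x| := by
            rw [abs_sub_comm, abs_of_nonneg (by linarith)]
            exact mul_le_mul_of_nonneg_right (Real.le_coe_toNNReal C) (by linarith)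
    · rw [Real.dist_eq, Real.dist_eq]
      have := hlip' x y hx hy hxy
      calc |φ x - φ y| ≤ C * (y - x) := by rw [abs_sub_comm]; exact this
        _ ≤ C.toNNReal * |x - y| := by
            rw [abs_sub_comm, abs_of_nonneg (by linarith)]
            exact mul_le_mul_of_nonneg_right (Real.le_coe_toNNReal C) (by linarith)
  have h1 := hlip.ae_differentiableWithinAt_of_mem_real
  have h2 : ∀ᵐ x, x ∈ Ioi (0:ℝ) → diniE φ x = (h x : EReal) :=
    (ae_restrict_iff' measurableSet_Ioi).1 hae
  filter_upwards [h1, h2] with x hx1 hx2 hx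
  have hmem : Icc s t ∈ 𝓝 x := Icc_mem_nhds hx.1 hx.2
  have hdiff : DifferentiableAt ℝ φ x := (hx1 (Ioo_subset_Icc_self hx)).differentiableAt hmem
  have hd : HasDerivAt φ (deriv φ x) x := hdiff.hasDerivAt
  have he : diniE φ x = ((deriv φ x : ℝ) : EReal) := diniE_eq_of_hasDerivAt hd
  have hx0 : x ∈ Ioi (0:ℝ) := hs.trans hx.1
  rw [hx2 hx0] at he
  have : h x = deriv φ x := by exact_mod_cast he
  rwa [this]

lemma tendsto_add_seq (x : ℝ) {δ : ℕ → ℝ} (hδpos : ∀ n, 0 < δ n)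
    (hδ0 : Tendsto δ atTop (𝓝 0)) :
    Tendsto (fun n => x + δ n) atTop (nhdsWithin x {x}ᶜ) := by
  apply tendsto_nhdsWithin_of_tendsto_nhds_of_eventually_within
  · simpa using tendsto_const_nhds.add hδ0
  · exact Eventually.of_forall fun n => by
      simp only [mem_compl_iff, mem_singleton_iff]
      intro hcontra
      have : δ n = 0 := by linarith [congrArg id hcontra]
      exact absurd this (ne_of_gt (hδpos n))

lemma tendsto_avg_integral {φ : ℝ → ℝ} (hcont : ContinuousOn φ (Ioi 0)) {b : ℝ} (hb : 0 < b)
    {δ : ℕ → ℝ} (hδpos : ∀ n, 0 < δ n) (hδ0 : Tendsto δ atTop (𝓝 0)) :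
    Tendsto (fun n => (∫ y in b..(b + δ n), φ y) / δ n) atTop (𝓝 (φ b)) := by
  have hF : HasDerivAt (fun u => ∫ y in b..u, φ y) (φ b) b := by
    apply intervalIntegral.integral_hasDerivAt_right
    · exact IntervalIntegrable.refl
    · exact hcont.stronglyMeasurableAtFilter isOpen_Ioi b hb
    · exact hcont.continuousAt (isOpen_Ioi.mem_nhds hb)
  have hslope := hasDerivAt_iff_tendsto_slope.1 hF
  have hseq : Tendsto (fun n => b + δ n) atTop (nhdsWithin b {b}ᶜ) :=
    tendsto_add_seq b hδpos hδ0
  have := hslope.comp hseq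
  convert this using 2 with n
  simp [Function.comp, slope_def_field, intervalIntegral.integral_same]

lemma integral_identity {φ h : ℝ → ℝ} (hcont : ContinuousOn φ (Ioi 0))
    (hbdd : ∀ s t : ℝ, 0 < s → s < t → ∃ C : ℝ, ∀ x ∈ Icc s t,
      -(C : EReal) ≤ diniE φ x ∧ diniE φ x ≤ (C : EReal))
    (hae : ∀ᵐ x ∂(volume.restrict (Ioi (0:ℝ))), diniE φ x = (h x : EReal)) :
    ∀ a b : ℝ, 0 < a → a ≤ b → φ b - φ a = ∫ y in a..b, h y := by
  intro a b ha hab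
  set s : ℝ := a / 2 with hs_def
  set t : ℝ := b + 1 with ht_def
  have hs : 0 < s := by positivity
  have hsa : s < a := by simp only [hs_def]; linarith
  have hbt : b < t := by simp only [ht_def]; linarith
  have hst : s < t := by linarith
  obtain ⟨C, hC⟩ := hbdd s t hs hst
  have hlip := lip_of_dini hcont hs hC
  have hC0 : 0 ≤ C := by
    obtain ⟨h1, h2⟩ := hC a ⟨hsa.le, by linarith⟩
    have h3 : -(C : EReal) ≤ (C : EReal) := h1.trans h2
    rw [← EReal.coe_neg] at h3
    have := EReal.coe_le_coe_iff.1 h3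
    linarith
  set δ : ℕ → ℝ := fun n => 1 / (n + 1) with hδ_def
  have hδpos : ∀ n, 0 < δ n := fun n => by positivity
  have hδle : ∀ n, δ n ≤ 1 := fun n => by
    rw [hδ_def]
    rw [div_le_one (by positivity)]
    simp
  have hδ0 : Tendsto δ atTop (𝓝 0) := tendsto_one_div_add_atTop_nhds_zero_nat
  -- memberships
  have hmem : ∀ x ∈ Icc a b, x ∈ Icc s t := fun x hx => ⟨hsa.le.trans hx.1, hx.2.trans hbt.le⟩
  have hmemδ : ∀ n, ∀ x ∈ Icc a b, x + δ n ∈ Icc s t := fun n x hx =>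
    ⟨by linarith [hx.1, (hδpos n)], by have := hδle n; simp only [ht_def]; linarith [hx.2]⟩
  have hIccpos : Icc s t ⊆ Ioi 0 := fun y hy => lt_of_lt_of_le hs hy.1
  have hφint : ∀ u v : ℝ, u ∈ Icc s t → v ∈ Icc s t → IntervalIntegrable φ volume u v := by
    intro u v hu hv
    apply ContinuousOn.intervalIntegrable
    apply hcont.mono
    refine subset_trans ?_ hIccpos
    rw [uIcc_eq_union]
    exact union_subset (Icc_subset_Icc hu.1 hv.2) (Icc_subset_Icc hv.1 hu.2)
  have haI : a ∈ Icc s t := ⟨hsa.le, by linarith⟩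
  have hbI : b ∈ Icc s t := ⟨by linarith, hbt.le⟩
  -- (i) integral identity for the slopes
  have hi : ∀ n, (∫ x in a..b, (φ (x + δ n) - φ x) / δ n) =
      ((∫ y in b..(b + δ n), φ y) - ∫ y in a..(a + δ n), φ y) / δ n := by
    intro n
    have haδ : a + δ n ∈ Icc s t := hmemδ n a ⟨le_rfl, hab⟩
    have hbδ : b + δ n ∈ Icc s t := hmemδ n b ⟨hab, le_rfl⟩
    have hint1 : IntervalIntegrable (fun x => φ (x + δ n)) volume a b := by
      have := (hφint (a + δ n) (b + δ n) haδ hbδ).comp_add_right (δ n)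
      simpa using this
    have hint2 := hφint a b haI hbI
    have e1 : (∫ x in a..b, (φ (x + δ n) - φ x) / δ n) =
        ((∫ x in a..b, φ (x + δ n)) - ∫ x in a..b, φ x) / δ n := by
      rw [intervalIntegral.integral_div, intervalIntegral.integral_sub hint1 hint2]
    rw [e1, intervalIntegral.integral_comp_add_right]
    have e2 : (∫ x in a..(a + δ n), φ x) + (∫ x in (a + δ n)..(b + δ n), φ x) =
        ∫ x in a..(b + δ n), φ x :=
      intervalIntegral.integral_add_adjacent_intervals (hφint _ _ haI haδ) (hφint _ _ haδ hbδ)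
    have e3 : (∫ x in a..b, φ x) + (∫ x in b..(b + δ n), φ x) = ∫ x in a..(b + δ n), φ x :=
      intervalIntegral.integral_add_adjacent_intervals (hφint _ _ haI hbI) (hφint _ _ hbI hbδ)
    congr 1
    linarith [e2, e3]
    -- (ii) limits of boundary averages
  have hFb := tendsto_avg_integral hcont (lt_of_lt_of_le ha hab) hδpos hδ0
  have hFa := tendsto_avg_integral hcont ha hδpos hδ0
  have hlhs : Tendsto (fun n => ∫ x in a..b, (φ (x + δ n) - φ x) / δ n) atTop
      (𝓝 (φ b - φ a)) := by
    have heq : (fun n => ∫ x in a..b, (φ (x + δ n) - φ x) / δ n) =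
        fun n => (∫ y in b..(b + δ n), φ y) / δ n - (∫ y in a..(a + δ n), φ y) / δ n := by
      funext n; rw [hi n, sub_div]
    rw [heq]; exact hFb.sub hFa
  have hderiv := ae_hasDerivAt hcont hae hs hC
  have hrhs : Tendsto (fun n => ∫ x in a..b, (φ (x + δ n) - φ x) / δ n) atTop
      (𝓝 (∫ x in a..b, h x)) := by
    apply intervalIntegral.tendsto_integral_filter_of_dominated_convergence (bound := fun _ => C)
    · refine Eventually.of_forall fun n => ?_
      have hcX : ContinuousOn (fun x => (φ (x + δ n) - φ x) / δ n) (Icc a b) := by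
        apply ContinuousOn.div_const
        apply ContinuousOn.sub
        · exact hcont.comp (continuous_id.add continuous_const).continuousOn
            (fun x hx => hIccpos (hmemδ n x hx))
        · exact hcont.mono fun x hx => hIccpos (hmem x hx)
      exact (hcX.aestronglyMeasurable measurableSet_Icc).mono_measure
        (Measure.restrict_mono (by rw [uIoc_of_le hab]; exact Ioc_subset_Icc_self) le_rfl)
    · refine Eventually.of_forall fun n => (ae_of_all _ fun x hx => ?_)
      rw [uIoc_of_le hab] at hx
      have hx' : x ∈ Icc a b := Ioc_subset_Icc_self hx
      have h1 := hlip x (x + δ n) (hmem x hx') (hmemδ n x hx') (by linarith [hδpos n])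
      rw [Real.norm_eq_abs, abs_div, abs_of_pos (hδpos n), div_le_iff₀ (hδpos n)]
      simpa using h1
    · exact intervalIntegrable_const
    · filter_upwards [hderiv] with x hx hxI
      rw [uIoc_of_le hab] at hxI
      have hxoo : x ∈ Ioo s t := ⟨lt_trans hsa hxI.1, lt_of_le_of_lt hxI.2 hbt⟩
      have hd := hx hxoo
      have hslope := hasDerivAt_iff_tendsto_slope.1 hd
      have := hslope.comp (tendsto_add_seq x hδpos hδ0)
      convert this using 2 with n
      simp [Function.comp, slope_def_field]
  exact tendsto_nhds_unique hlhs hrhs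

/-- If a continuous function on `(0,∞)` has a finite, measurable, locally bounded upper
right Dini derivative which agrees Lebesgue-a.e. with a continuous function `h`, then it
is continuously differentiable on `(0,∞)` with derivative `h`. -/
theorem stmt_12 (φ h : ℝ → ℝ)
    (hcont : ContinuousOn φ (Set.Ioi 0))
    (hfin : ∀ x ∈ Set.Ioi (0 : ℝ), diniE φ x ≠ ⊥ ∧ diniE φ x ≠ ⊤)
    (hmeas : Measurable fun x => diniE φ x)
    (hbdd : ∀ s t : ℝ, 0 < s → s < t → ∃ C : ℝ, ∀ x ∈ Set.Icc s t,
      -(C : EReal) ≤ diniE φ x ∧ diniE φ x ≤ (C : EReal))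
    (hh : ContinuousOn h (Set.Ioi 0))
    (hae : ∀ᵐ x ∂(MeasureTheory.volume.restrict (Set.Ioi (0 : ℝ))),
      diniE φ x = (h x : EReal)) :
    ∀ x ∈ Set.Ioi (0 : ℝ), HasDerivAt φ (h x) x := by
  intro x hx
  have hx0 : (0:ℝ) < x := hx
  set a : ℝ := x / 2 with ha_def
  have ha : 0 < a := by positivity
  have hax : a < x := by rw [ha_def]; linarith
  have key := integral_identity hcont hbdd hae
  have hgint : IntervalIntegrable h volume a x := by
    apply ContinuousOn.intervalIntegrable
    apply hh.mono
    rw [uIcc_of_le hax.le]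
    exact fun y hy => lt_of_lt_of_le ha hy.1
  have hF : HasDerivAt (fun u => ∫ y in a..u, h y) (h x) x :=
    intervalIntegral.integral_hasDerivAt_right hgint
      (hh.stronglyMeasurableAtFilter isOpen_Ioi x hx)
      (hh.continuousAt (isOpen_Ioi.mem_nhds hx))
  have hev : φ =ᶠ[𝓝 x] fun y => φ a + ∫ s in a..y, h s := by
    filter_upwards [isOpen_Ioi.mem_nhds (show x ∈ Ioi a from hax)] with y hy
    have := key a y ha (le_of_lt hy)
    linarith
  exact HasDerivAt.congr_of_eventuallyEq (hF.const_add (φ a)) hev
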